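/- Let R be a Noetherian commutative ring such that the space Prm(R) of primary ideals, with the coarse lower topology, is sober. Then the Krull dimension of R is at most 1. -/

import Mathlib

/-- The coarse lower topology on the set of ideals of a commutative ring. -/
def coarseLowerTopology (R : Type*) [CommRing R] : TopologicalSpace (Ideal R) :=
  TopologicalSpace.generateFrom {U : Set (Ideal R) | ∃ a : Ideal R, U = {i : Ideal R | a ≤ i}ᶜ}

open TopologicalSpace Ideal

section Aux

variable {R : Type*} [CommRing R]

/-- Opens of the coarse lower topology are lower sets. -/
lemma CLT.lower {W : Set (Ideal R)}
    (hW : GenerateOpen {U : Set (Ideal R) | ∃ a : Ideal R, U = {i : Ideal R | a ≤ i}ᶜ} W)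
    {i j : Ideal R} (hji : j ≤ i) (hi : i ∈ W) : j ∈ W := by
  induction hW with
  | basic U hU => obtain ⟨a, rfl⟩ := hU; exact fun ha => hi (ha.trans hji)
  | univ => trivial
  | inter U V hU hV ihU ihV => exact ⟨ihU hi.1, ihV hi.2⟩
  | sUnion S hS ih =>
      obtain ⟨U, hUS, hiU⟩ := hi
      exact ⟨U, hUS, ih U hUS hiU⟩

/-- If an open set of the coarse lower topology contains an ideal above the infimum of an
antitone sequence of ideals, then it contains one of the terms of the sequence. -/
lemma CLT.exists_mem {q : ℕ → Ideal R} (hq : Antitone q) {W : Set (Ideal R)}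
    (hW : GenerateOpen {U : Set (Ideal R) | ∃ a : Ideal R, U = {i : Ideal R | a ≤ i}ᶜ} W)
    {w : Ideal R} (hJw : (⨅ n, q n) ≤ w) (hw : w ∈ W) : ∃ n, q n ∈ W := by
  induction hW with
  | basic U hU =>
      obtain ⟨a, rfl⟩ := hU
      by_contra hc
      push_neg at hc
      simp only [Set.mem_compl_iff, Set.mem_setOf_eq, not_not] at hc
      exact hw (le_trans (le_iInf hc) hJw)
  | univ => exact ⟨0, trivial⟩
  | inter U V hU hV ihU ihV =>
      obtain ⟨n₁, hn₁⟩ := ihU hw.1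
      obtain ⟨n₂, hn₂⟩ := ihV hw.2
      exact ⟨max n₁ n₂, CLT.lower hU (hq (le_max_left _ _)) hn₁,
        CLT.lower hV (hq (le_max_right _ _)) hn₂⟩
  | sUnion S hS ih =>
      obtain ⟨U, hUS, hwU⟩ := hw
      obtain ⟨n, hn⟩ := ih U hUS hwU
      exact ⟨n, U, hUS, hn⟩

/-- Principal up-sets are closed in the coarse lower topology. -/
lemma CLT.isClosed (J : Ideal R) :
    letI := coarseLowerTopology R
    IsClosed {i : Ideal R | J ≤ i} := by
  letI := coarseLowerTopology R
  rw [← isOpen_compl_iff]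
  exact isOpen_generateFrom_of_mem ⟨J, rfl⟩

/-- If the space of primary ideals is sober, then the infimum of an antitone sequence of
primary ideals (all below a fixed maximal ideal) is primary. -/
lemma CLT.inf_isPrimary [IsNoetherianRing R]
    (h : letI := coarseLowerTopology R; QuasiSober {a : Ideal R | a.IsPrimary})
    {q : ℕ → Ideal R} (hq : Antitone q) (hqprim : ∀ n, (q n).IsPrimary)
    {m : Ideal R} (hm : m.IsMaximal) (hqm : ∀ n, q n ≤ m) :
    (⨅ n, q n).IsPrimary := by
  letI := coarseLowerTopology R
  set J := ⨅ n, q n with hJ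
  set T : Set {a : Ideal R | a.IsPrimary} := {i | J ≤ i.1} with hT
  have hclosed : ∀ I : Ideal R, IsClosed {i : {a : Ideal R | a.IsPrimary} | I ≤ i.1} := by
    intro I
    exact (CLT.isClosed I).preimage continuous_subtype_val
  have hTne : T.Nonempty := ⟨⟨m, hm.isPrime.isPrimary⟩, le_trans (iInf_le _ 0) (hqm 0)⟩
  have hirr : IsIrreducible T := by
    refine ⟨hTne, ?_⟩
    intro U V hU hV ⟨u, huT, huU⟩ ⟨v, hvT, hvV⟩
    obtain ⟨U', hU', rfl⟩ := isOpen_induced_iff.mp hU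
    obtain ⟨V', hV', rfl⟩ := isOpen_induced_iff.mp hV
    have hU'g : GenerateOpen {W : Set (Ideal R) | ∃ a : Ideal R, W = {i : Ideal R | a ≤ i}ᶜ} U' :=
      hU'
    have hV'g : GenerateOpen {W : Set (Ideal R) | ∃ a : Ideal R, W = {i : Ideal R | a ≤ i}ᶜ} V' :=
      hV'
    obtain ⟨n₁, hn₁⟩ := CLT.exists_mem hq hU'g huT huU
    obtain ⟨n₂, hn₂⟩ := CLT.exists_mem hq hV'g hvT hvV
    refine ⟨⟨q (max n₁ n₂), hqprim _⟩,
      show J ≤ q (max n₁ n₂) from iInf_le _ _, ?_, ?_⟩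
    · exact CLT.lower hU'g (hq (le_max_left _ _)) hn₁
    · exact CLT.lower hV'g (hq (le_max_right _ _)) hn₂
  obtain ⟨ξ, hξ⟩ := h.sober hirr (hclosed J)
  have hξT : ξ ∈ T := hξ.mem
  have hle : ∀ n, ξ.1 ≤ q n := by
    intro n
    have hqT : (⟨q n, hqprim n⟩ : {a : Ideal R | a.IsPrimary}) ∈ T :=
      show J ≤ q n from iInf_le _ n
    rw [← hξ] at hqT
    have : closure {ξ} ⊆ {i : {a : Ideal R | a.IsPrimary} | ξ.1 ≤ i.1} :=
      closure_minimal (by simp) (hclosed ξ.1)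
    exact this hqT
  have : ξ.1 = J := le_antisymm (le_iInf hle) hξT
  rw [← this]
  exact ξ.2

/-- Krull intersection: elementwise version modulo an ideal. -/
lemma CLT.krull [IsNoetherianRing R] {A m : Ideal R} {z : R}
    (hz : ∀ n : ℕ, z ∈ A ⊔ m ^ n) : ∃ r ∈ m, z - r * z ∈ A := by
  have hfin : Module.Finite R (R ⧸ A) :=
    Module.Finite.of_surjective A.mkQ (Submodule.mkQ_surjective A)
  have h1 : Submodule.Quotient.mk z ∈ (⨅ i : ℕ, m ^ i • ⊤ : Submodule R (R ⧸ A)) := by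
    rw [Submodule.mem_iInf]
    intro i
    obtain ⟨a, ha, b, hb, hab⟩ := Submodule.mem_sup.mp (hz i)
    have hzb : (Submodule.Quotient.mk z : R ⧸ A) = Submodule.Quotient.mk b := by
      rw [Submodule.Quotient.eq]
      have : z - b = a := by rw [← hab]; ring
      rw [this]; exact ha
    have hb1 : (Submodule.Quotient.mk b : R ⧸ A) = b • (Submodule.Quotient.mk (1 : R)) := by
      rw [← Submodule.Quotient.mk_smul, smul_eq_mul, mul_one]
    rw [hzb, hb1]
    exact Submodule.smul_mem_smul hb Submodule.mem_top
  obtain ⟨r, hr⟩ := (Ideal.mem_iInf_smul_pow_eq_bot_iff m _).mp h1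
  refine ⟨r, r.2, ?_⟩
  have : (Submodule.Quotient.mk (z - (r : R) * z) : R ⧸ A) = 0 := by
    rw [Submodule.Quotient.mk_sub, ← smul_eq_mul, Submodule.Quotient.mk_smul, hr, sub_self]
  rwa [Submodule.Quotient.mk_eq_zero] at this

end Aux

/-- If `R` is Noetherian and the space of primary ideals is sober, then the Krull
dimension of `R` is at most 1. -/
theorem dim_le_one_of_prm_sober {R : Type*} [CommRing R] [IsNoetherianRing R]
    (h : letI := coarseLowerTopology R; QuasiSober {a : Ideal R | a.IsPrimary}) :
    ringKrullDim R ≤ 1 := by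
  by_contra hdim
  push_neg at hdim
  rw [ringKrullDim, Order.krullDim] at hdim
  obtain ⟨p, hp⟩ := lt_iSup_iff.mp hdim
  have hlen : 1 < p.length := by exact_mod_cast hp
  -- extract a chain of three primes
  set P0 := p ⟨0, by omega⟩ with hP0
  set P1 := p ⟨1, by omega⟩ with hP1
  set P2 := p ⟨2, by omega⟩ with hP2
  have h01 : P0.asIdeal < P1.asIdeal := by
    rw [PrimeSpectrum.asIdeal_lt_asIdeal]
    exact p.strictMono (by simp [Fin.lt_def])
  have h12 : P1.asIdeal < P2.asIdeal := by
    rw [PrimeSpectrum.asIdeal_lt_asIdeal]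
    exact p.strictMono (by simp [Fin.lt_def])
  obtain ⟨m, hm, h2m⟩ := Ideal.exists_le_maximal P2.asIdeal P2.2.ne_top
  obtain ⟨x, hx1, hx0⟩ := SetLike.exists_of_lt h01
  obtain ⟨y, hy2, hy1⟩ := SetLike.exists_of_lt h12
  have hym : y ∈ m := h2m hy2
  have h1m : P1.asIdeal ≤ m := h12.le.trans h2m
  have h0m : P0.asIdeal ≤ m := h01.le.trans h1m
  -- the antitone family of primary ideals
  set A := P0.asIdeal ⊔ span {x} * m with hA
  set q : ℕ → Ideal R := fun n => A ⊔ m ^ (n + 1) with hq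
  have hAm : A ≤ m := sup_le h0m (Ideal.mul_le.mpr fun a _ b hb => m.mul_mem_left a hb)
  have hqm : ∀ n, q n ≤ m := fun n => sup_le hAm (Ideal.pow_le_self (Nat.succ_ne_zero n))
  have hqrad : ∀ n, radical (q n) = m := by
    intro n
    refine le_antisymm ?_ ?_
    · calc radical (q n) ≤ radical m := radical_mono (hqm n)
        _ = m := hm.isPrime.radical
    · calc m ≤ radical m := le_radical
        _ = radical (m ^ (n + 1)) := (radical_pow m (Nat.succ_ne_zero n)).symm
        _ ≤ radical (q n) := radical_mono le_sup_right
  have hqprim : ∀ n, (q n).IsPrimary := by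
    intro n
    apply isPrimary_of_isMaximal_radical
    rw [hqrad n]
    exact hm
  have hqanti : Antitone q := fun n k hnk =>
    sup_le_sup_left (Ideal.pow_le_pow_right (by omega)) A
  have hAp1 : A ≤ P1.asIdeal :=
    sup_le h01.le (Ideal.mul_le.mpr fun a ha b _ =>
      P1.asIdeal.mul_mem_right b ((span_le.mpr (by simpa using hx1) : span {x} ≤ P1.asIdeal) ha))
  -- the infimum is primary by sobriety
  have hJprim : (⨅ n, q n).IsPrimary := CLT.inf_isPrimary h hqanti hqprim hm hqm
  set J := ⨅ n, q n with hJ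
  have hzmem : ∀ z, z ∈ J → ∀ i : ℕ, z ∈ A ⊔ m ^ i := by
    intro z hz i
    cases i with
    | zero => simp
    | succ n => exact (iInf_le q n) hz
  -- but it is not primary, contradiction
  have hxy : x * y ∈ J :=
    Submodule.mem_iInf _ |>.mpr fun n =>
      (le_sup_left : A ≤ q n) ((le_sup_right : span {x} * m ≤ A)
        (mem_span_singleton_mul.mpr ⟨y, hym, rfl⟩))
  rcases (isPrimary_iff.mp hJprim).2 hxy with hx | hy
  · -- x ∈ J is impossible
    obtain ⟨r, hrm, hr⟩ := CLT.krull (hzmem x hx)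
    obtain ⟨a, ha, b, hb, hab⟩ := Submodule.mem_sup.mp hr
    obtain ⟨c, hc, hbc⟩ := mem_span_singleton_mul.mp hb
    have hxa : x * (1 - r - c) ∈ P0.asIdeal := by
      have : x * (1 - r - c) = a := by linear_combination -hab - hbc
      rw [this]; exact ha
    rcases P0.2.mem_or_mem hxa with h' | h'
    · exact hx0 h'
    · have hone : (1 : R) ∈ m := by
        have : (1 : R) = (1 - r - c) + r + c := by ring
        rw [this]
        exact add_mem (add_mem (h0m h') hrm) hc
      exact hm.ne_top ((Ideal.eq_top_iff_one m).mpr hone)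
  · -- y ∈ radical J is impossible
    obtain ⟨k, hyk⟩ := mem_radical_iff.mp hy
    obtain ⟨r, hrm, hr⟩ := CLT.krull (hzmem _ hyk)
    have hy1k : (1 - r) * y ^ k ∈ P1.asIdeal := by
      have : (1 - r) * y ^ k = y ^ k - r * y ^ k := by ring
      rw [this]
      exact hAp1 hr
    rcases P1.2.mem_or_mem hy1k with h' | h'
    · have hone : (1 : R) ∈ m := by
        have : (1 : R) = (1 - r) + r := by ring
        rw [this]
        exact add_mem (h1m h') hrm
      exact hm.ne_top ((Ideal.eq_top_iff_one m).mpr hone)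
    · exact hy1 (P1.2.mem_of_pow_mem k h')
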